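/- Fix q ∈ [0,1), ν ∈ [0,1), ᾱ > 0 and ρ ∈ (0,1), and let f be the tilted step distribution with parameters (q, ᾱ, ν, ρ). Set γ = (1−ρ)/(1−νρ), A = ᾱγ/(1+ᾱγ), A_q = qᾱγ/(1+qᾱγ), b = γ/(1−γ) and b' = νγ/(1−νγ). Then b − b' > 0 and the mean of f satisfies Σ_{n∈ℕ} n·f(n) = (A − A_q)/(b − b'). -/

import Mathlib

set_option maxHeartbeats 1000000


/-- The step distribution with parameters `(q, ᾱ, ν)`:
`p(0) = 1 − ᾱ(1−q)/(1+ᾱ)` and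
`p(n) = (ᾱ(1−q)(1−ν)/(1+ᾱ)²)·((ν+ᾱ)/(1+ᾱ))^{n−1}` for `n ≥ 1`. -/
noncomputable def stepDist (q a ν : ℝ) : ℕ → ℝ := fun n =>
  if n = 0 then 1 - a * (1 - q) / (1 + a)
  else (a * (1 - q) * (1 - ν) / (1 + a) ^ 2) * ((ν + a) / (1 + a)) ^ (n - 1)

/-- The tilted step distribution with parameters `(q, ᾱ, ν, ρ)`:
`f(n) = λ ρ^n p(n)` where `γ = (1−ρ)/(1−νρ)` and `λ = (1+ᾱγ)/(1+qᾱγ)`. -/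
noncomputable def tiltedStepDist (q a ν ρ : ℝ) : ℕ → ℝ := fun n =>
  ((1 + a * ((1 - ρ) / (1 - ν * ρ))) / (1 + q * a * ((1 - ρ) / (1 - ν * ρ)))) *
    ρ ^ n * stepDist q a ν n

/-- With `γ = (1−ρ)/(1−νρ)`, `A = ᾱγ/(1+ᾱγ)`, `A_q = qᾱγ/(1+qᾱγ)`,
`b = γ/(1−γ)`, `b' = νγ/(1−νγ)`, one has `b − b' > 0` and the mean of the tilted step
distribution equals `(A − A_q)/(b − b')`. -/
theorem tiltedStepDist_mean (q ν a ρ γ A Aq b b' : ℝ)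
    (hq0 : 0 ≤ q) (hq1 : q < 1) (hν0 : 0 ≤ ν) (hν1 : ν < 1) (ha : 0 < a)
    (hρ0 : 0 < ρ) (hρ1 : ρ < 1)
    (hγ : γ = (1 - ρ) / (1 - ν * ρ))
    (hA : A = a * γ / (1 + a * γ)) (hAq : Aq = q * a * γ / (1 + q * a * γ))
    (hb : b = γ / (1 - γ)) (hb' : b' = ν * γ / (1 - ν * γ)) :
    0 < b - b' ∧
    (∑' n : ℕ, (n : ℝ) * tiltedStepDist q a ν ρ n) = (A - Aq) / (b - b') := by
  have hνρ : ν * ρ < 1 := by nlinarith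
  have hνρ' : (0:ℝ) < 1 - ν * ρ := by linarith
  have hγ0 : 0 < γ := by rw [hγ]; exact div_pos (by linarith) hνρ'
  have hγ1 : γ < 1 := by rw [hγ, div_lt_one hνρ']; nlinarith
  have hνγ : ν * γ < 1 := by nlinarith
  have h3 : (0:ℝ) < 1 - γ := by linarith
  have h4 : (0:ℝ) < 1 - ν * γ := by linarith
  have hbpos : 0 < b - b' := by
    rw [hb, hb', div_sub_div _ _ (ne_of_gt h3) (ne_of_gt h4)]
    have hnum : γ * (1 - ν * γ) - (1 - γ) * (ν * γ) = γ * (1 - ν) := by ring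
    rw [hnum]
    exact div_pos (by nlinarith) (by nlinarith)
  refine ⟨hbpos, ?_⟩
  have h1a : (0:ℝ) < 1 + a := by linarith
  have hr0 : (0:ℝ) < (ν + a) / (1 + a) := by positivity
  have hr1 : (ν + a) / (1 + a) < 1 := by rw [div_lt_one h1a]; linarith
  set r : ℝ := (ν + a) / (1 + a) with hr
  set x : ℝ := ρ * r with hx
  clear_value r x
  have hx0 : 0 < x := by rw [hx]; positivity
  have hx1 : x < 1 := by rw [hx]; nlinarith
  have h1 : (0:ℝ) < 1 + a * γ := by positivity
  have h2 : (0:ℝ) < 1 + q * a * γ := by positivity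
  have htilt : ∀ n, tiltedStepDist q a ν ρ n
      = ((1 + a * γ) / (1 + q * a * γ)) * ρ ^ n * stepDist q a ν n := by
    intro n; rw [tiltedStepDist, hγ]
  set L : ℝ := (1 + a * γ) / (1 + q * a * γ) with hL
  set K : ℝ := L * (a * (1 - q) * (1 - ν) / (1 + a) ^ 2) / r with hK
  clear_value L K
  have hfun : (fun n : ℕ => (n : ℝ) * tiltedStepDist q a ν ρ n)
      = fun n : ℕ => K * ((n : ℝ) * x ^ n) := by
    funext n
    rw [htilt n]
    cases n with
    | zero => simp
    | succ m =>
      simp only [stepDist, Nat.succ_ne_zero, if_false, Nat.add_sub_cancel]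
      have hνa : (0:ℝ) < ν + a := by linarith
      rw [hK, hx, hr, mul_pow, pow_succ, div_pow]
      simp only [div_pow]
      field_simp [ne_of_gt hνa, ne_of_gt h1a]
      ring
  rw [hfun, tsum_mul_left, tsum_coe_mul_geometric_of_norm_lt_one
    (by rw [Real.norm_eq_abs, abs_of_pos hx0]; exact hx1)]
  have e1 : 1 - γ = ρ * (1 - ν) / (1 - ν * ρ) := by
    rw [hγ, eq_div_iff (ne_of_gt hνρ'), sub_mul, div_mul_cancel₀ _ (ne_of_gt hνρ')]; ring
  have e2 : 1 - ν * γ = (1 - ν) / (1 - ν * ρ) := by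
    rw [hγ]; field_simp [ne_of_gt hνρ']; ring
  have e3 : 1 - x = (1 - ν * ρ) * (1 + a * γ) / (1 + a) := by
    have hm : (1 - ν * ρ) * (1 + a * γ) = 1 - ν * ρ + a * (1 - ρ) := by
      rw [hγ, mul_add, mul_one, mul_left_comm, mul_div_cancel₀ _ (ne_of_gt hνρ')]
    rw [hm, hx, hr, eq_div_iff (ne_of_gt h1a), sub_mul, mul_assoc, div_mul_cancel₀ _ (ne_of_gt h1a)]; ring
  have hν' : (0:ℝ) < 1 - ν := by linarith
  have hD : γ / (ρ * (1 - ν) / (1 - ν * ρ)) - ν * γ / ((1 - ν) / (1 - ν * ρ)) ≠ 0 := by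
    have := ne_of_gt hbpos
    rw [hb, hb', e1, e2] at this
    exact this
  rw [hA, hAq, hb, hb', e1, e2, e3, hK, hL, hx, hr, eq_div_iff hD]
  field_simp [ne_of_gt hν', ne_of_gt hνρ', ne_of_gt h1a, ne_of_gt h1, ne_of_gt h2,
    ne_of_gt hγ0, ne_of_gt hρ0, ne_of_gt (by linarith : (0:ℝ) < ν + a)]
  ring
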